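/- Let h ∈ ℂ[X,Y] be a polynomial without constant term, with both partial derivatives ∂h/∂X and ∂h/∂Y non-zero, not divisible by X² and not divisible by Y². If each of the right and top Newton polygons of h is empty or consists only of its exceptional segment, then h(X,Y) = aX + bY + cXY for some a, b, c ∈ ℂ with ab ≠ 0 or c ≠ 0. -/

import Mathlib

open scoped Classical

noncomputable section

/-- A (candidate) segment in the plane, given by its two lattice endpoints. -/
structure Seg where
  P : ℕ × ℕ
  Q : ℕ × ℕ

/-- the support of a polynomial in two variables, as a finite set of pairs `(α,β)`. -/
def supp (h : MvPolynomial (Fin 2) ℂ) : Finset (ℕ × ℕ) :=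
  h.support.image fun d => (d 0, d 1)

/-- the coefficient `h_{αβ}` of `X^α Y^β` in `h`. -/
def coeff2 (h : MvPolynomial (Fin 2) ℂ) (p : ℕ × ℕ) : ℂ :=
  MvPolynomial.coeff (Finsupp.single 0 p.1 + Finsupp.single 1 p.2) h

/-- the linear functional whose level lines are parallel to `S`, normalized so that
(for a right-polygon segment, `S.P.2 < S.Q.2`) its gradient points to the right. -/
def lfun (S : Seg) (v : ℕ × ℕ) : ℤ :=
  ((S.Q.2 : ℤ) - S.P.2) * v.1 - ((S.Q.1 : ℤ) - S.P.1) * v.2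

/-- the linear functional whose level lines are parallel to `S`, normalized so that
(for a top-polygon segment, `S.P.1 < S.Q.1`) its gradient points upwards. -/
def gfun (S : Seg) (v : ℕ × ℕ) : ℤ :=
  ((S.Q.1 : ℤ) - S.P.1) * v.2 - ((S.Q.2 : ℤ) - S.P.2) * v.1

/-- `v` lies on the segment with endpoints `S.P` and `S.Q`
(collinear and inside the bounding box). -/
def OnSeg (S : Seg) (v : ℕ × ℕ) : Prop :=
  lfun S v = lfun S S.P ∧
  min S.P.1 S.Q.1 ≤ v.1 ∧ v.1 ≤ max S.P.1 S.Q.1 ∧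
  min S.P.2 S.Q.2 ≤ v.2 ∧ v.2 ≤ max S.P.2 S.Q.2

/-- `S` is a segment (one-dimensional boundary face) of the right Newton polygon of `h`:
its endpoints (ordered by increasing ordinate) are in the support, the whole support lies
weakly to the left of the line through `S` (the supporting line has outward normal with
positive first coordinate), and `S` is a maximal face: every support point on this line has
ordinate between those of the endpoints. Such segments are exactly the boundary faces on
the right of the Newton diagram joining the lines `β = ord_Y h` and `β = deg_Y h`. -/
def RightSeg (h : MvPolynomial (Fin 2) ℂ) (S : Seg) : Prop :=
  S.P ∈ supp h ∧ S.Q ∈ supp h ∧ S.P.2 < S.Q.2 ∧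
  (∀ v ∈ supp h, lfun S v ≤ lfun S S.P) ∧
  (∀ v ∈ supp h, lfun S v = lfun S S.P → S.P.2 ≤ v.2 ∧ v.2 ≤ S.Q.2)

/-- `S` is a segment of the top Newton polygon of `h` (endpoints ordered by increasing
abscissa; the supporting line has outward normal with positive second coordinate). -/
def TopSeg (h : MvPolynomial (Fin 2) ℂ) (S : Seg) : Prop :=
  S.P ∈ supp h ∧ S.Q ∈ supp h ∧ S.P.1 < S.Q.1 ∧
  (∀ v ∈ supp h, gfun S v ≤ gfun S S.P) ∧
  (∀ v ∈ supp h, gfun S v = gfun S S.P → S.P.1 ≤ v.1 ∧ v.1 ≤ S.Q.1)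

/-- `σ(S)` for a right-polygon segment (endpoints ordered by increasing ordinate):
`0` if `S` is vertical, otherwise minus the sign of the slope of `S`. -/
def sigmaR (S : Seg) : ℤ :=
  if S.P.1 = S.Q.1 then 0 else if S.P.1 < S.Q.1 then -1 else 1

/-- `σ(S)` for a top-polygon segment (endpoints ordered by increasing abscissa). -/
def sigmaT (S : Seg) : ℤ :=
  if S.P.2 = S.Q.2 then 0 else if S.P.2 < S.Q.2 then -1 else 1

/-- `|S₁|`, the length of the projection of `S` on the horizontal axis. -/
def len1 (S : Seg) : ℚ := |(S.Q.1 : ℚ) - S.P.1|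

/-- `|S₂|`, the length of the projection of `S` on the vertical axis. -/
def len2 (S : Seg) : ℚ := |(S.Q.2 : ℚ) - S.P.2|

/-- the declivity `(|S₁|/|S₂|)·σ(S)` of a right-polygon segment. -/
def decl (S : Seg) : ℚ := len1 S / len2 S * (sigmaR S : ℚ)

/-- the declivity `(|S₂|/|S₁|)·σ(S)` of a top-polygon segment. -/
def tdecl (S : Seg) : ℚ := len2 S / len1 S * (sigmaT S : ℚ)

/-- `α(S)`: the abscissa of the intersection of the line through `S` with the
horizontal axis. -/
def alphaS (S : Seg) : ℚ := (S.P.1 : ℚ) + (S.P.2 : ℚ) * decl S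

/-- `β(S)`: the ordinate of the intersection of the line through `S` with the
vertical axis. -/
def betaS (S : Seg) : ℚ := (S.P.2 : ℚ) + (S.P.1 : ℚ) * tdecl S

/-- a right-polygon segment is exceptional if it joins the horizontal axis with a
point of the form `(p, 1)`. -/
def RExcep (S : Seg) : Prop := S.P.2 = 0 ∧ S.Q.2 = 1

/-- a top-polygon segment is exceptional if it joins the vertical axis with a
point of the form `(1, q)`. -/
def TExcep (S : Seg) : Prop := S.P.1 = 0 ∧ S.Q.1 = 1

/-- `in(h,S)`: the sum of the monomials of `h` supported on the segment `S`. -/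
def inPoly (h : MvPolynomial (Fin 2) ℂ) (S : Seg) : MvPolynomial (Fin 2) ℂ :=
  ∑ p ∈ (supp h).filter (OnSeg S),
    MvPolynomial.monomial (Finsupp.single 0 p.1 + Finsupp.single 1 p.2) (coeff2 h p)

namespace Prop22Aux

open MvPolynomial Finsupp

def pairRep (p : ℕ × ℕ) : Fin 2 →₀ ℕ := Finsupp.single 0 p.1 + Finsupp.single 1 p.2

@[simp] lemma pairRep_apply0 (p : ℕ × ℕ) : pairRep p 0 = p.1 := by
  simp [pairRep, Finsupp.single_apply]

@[simp] lemma pairRep_apply1 (p : ℕ × ℕ) : pairRep p 1 = p.2 := by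
  simp [pairRep, Finsupp.single_apply]

lemma rep_eq (d : Fin 2 →₀ ℕ) : d = pairRep (d 0, d 1) := by
  ext i
  fin_cases i
  · simp
  · simp

lemma pairRep_inj_iff {p q : ℕ × ℕ} : pairRep p = pairRep q ↔ p = q := by
  constructor
  · intro hpq
    have h0 : pairRep p 0 = pairRep q 0 := by rw [hpq]
    have h1 : pairRep p 1 = pairRep q 1 := by rw [hpq]
    simp only [pairRep_apply0, pairRep_apply1] at h0 h1
    exact Prod.ext h0 h1
  · rintro rfl; rfl

lemma mem_supp {h : MvPolynomial (Fin 2) ℂ} {p : ℕ × ℕ} :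
    p ∈ supp h ↔ pairRep p ∈ h.support := by
  constructor
  · intro hp
    simp only [supp, Finset.mem_image] at hp
    obtain ⟨d, hd, hdp⟩ := hp
    have : pairRep p = d := by rw [← hdp, ← rep_eq]
    rwa [this]
  · intro hp
    simp only [supp, Finset.mem_image]
    exact ⟨pairRep p, hp, by simp⟩

lemma pow_dvd {i : Fin 2} {h : MvPolynomial (Fin 2) ℂ} (H : ∀ d ∈ h.support, 2 ≤ d i) :
    MvPolynomial.X i ^ 2 ∣ h := by
  conv_rhs => rw [← MvPolynomial.support_sum_monomial_coeff h]
  apply Finset.dvd_sum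
  intro d hd
  refine ⟨MvPolynomial.monomial (d - Finsupp.single i 2) (MvPolynomial.coeff d h), ?_⟩
  rw [MvPolynomial.X_pow_eq_monomial, MvPolynomial.monomial_mul, one_mul,
    add_tsub_cancel_of_le (Finsupp.single_le_iff.2 (H d hd))]

lemma exists_pos_of_pderiv {i : Fin 2} {h : MvPolynomial (Fin 2) ℂ}
    (H : MvPolynomial.pderiv i h ≠ 0) : ∃ d ∈ h.support, 1 ≤ d i := by
  by_contra hc
  push_neg at hc
  apply H
  conv_lhs => rw [← MvPolynomial.support_sum_monomial_coeff h]
  rw [map_sum]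
  apply Finset.sum_eq_zero
  intro d hd
  have : d i = 0 := by have := hc d hd; omega
  rw [MvPolynomial.pderiv_monomial, this]
  simp

/-- The key combinatorial lemma: if every "right segment" of the finite set `A`
has upper endpoint at height 1, and some point of `A` has height ≤ 1,
then all points of `A` have height ≤ 1. -/
lemma key (A : Finset (ℕ × ℕ))
    (hA : ∀ P Q : ℕ × ℕ, P ∈ A → Q ∈ A → P.2 < Q.2 →
      (∀ v ∈ A, lfun ⟨P, Q⟩ v ≤ lfun ⟨P, Q⟩ P) →
      (∀ v ∈ A, lfun ⟨P, Q⟩ v = lfun ⟨P, Q⟩ P → P.2 ≤ v.2 ∧ v.2 ≤ Q.2) → Q.2 = 1)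
    (hlow : ∃ v ∈ A, v.2 ≤ 1) :
    ∀ v ∈ A, v.2 ≤ 1 := by
  by_contra hcon
  push_neg at hcon
  obtain ⟨w, hwA, hw2⟩ := hcon
  obtain ⟨v0, hv0A, hv02⟩ := hlow
  obtain ⟨Q0, hQ0A, hQ0max⟩ := A.exists_max_image Prod.snd ⟨w, hwA⟩
  set B := Q0.2 with hB
  have hB2 : 2 ≤ B := le_trans hw2 (hQ0max w hwA)
  obtain ⟨Q, hQmem, hQmax⟩ := (A.filter (fun v => v.2 = B)).exists_max_image Prod.fst
    ⟨Q0, by simp [hQ0A, hB]⟩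
  rw [Finset.mem_filter] at hQmem
  obtain ⟨hQA, hQ2⟩ := hQmem
  set V := A.filter (fun v => v.2 < B) with hV
  have hv0V : v0 ∈ V := by
    rw [hV, Finset.mem_filter]; exact ⟨hv0A, by omega⟩
  set t : ℕ × ℕ → ℚ := fun v => ((v.1 : ℚ) - Q.1) / ((B : ℚ) - v.2) with ht
  obtain ⟨P0, hP0, hP0max⟩ := V.exists_max_image t ⟨v0, hv0V⟩
  obtain ⟨P, hPmem, hPmin⟩ := (V.filter (fun v => t v = t P0)).exists_min_image Prod.snd
    ⟨P0, by simp [hP0]⟩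
  rw [Finset.mem_filter, hV, Finset.mem_filter] at hPmem
  obtain ⟨⟨hPA, hPB⟩, hPt⟩ := hPmem
  -- basic cast facts
  have hPBq : (P.2 : ℚ) < B := by exact_mod_cast hPB
  have hQ2q : (Q.2 : ℚ) = B := by exact_mod_cast hQ2
  -- the supporting-line inequality
  have claim1 : ∀ v ∈ A, lfun ⟨P, Q⟩ v ≤ lfun ⟨P, Q⟩ P := by
    intro v hv
    show ((Q.2 : ℤ) - P.2) * v.1 - ((Q.1 : ℤ) - P.1) * v.2 ≤
      ((Q.2 : ℤ) - P.2) * P.1 - ((Q.1 : ℤ) - P.1) * P.2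
    qify
    have hvB : v.2 ≤ B := hQ0max v hv
    rcases eq_or_lt_of_le hvB with hvB' | hvB'
    · -- v on the top level
      have hv1 : v.1 ≤ Q.1 := hQmax v (by rw [Finset.mem_filter]; exact ⟨hv, hvB'⟩)
      have hv1q : (v.1 : ℚ) ≤ Q.1 := by exact_mod_cast hv1
      have hvBq : (v.2 : ℚ) = B := by exact_mod_cast hvB'
      nlinarith [hv1q, hPBq, hQ2q, hvBq]
    · -- v strictly below the top level
      have hvV : v ∈ V := by rw [hV, Finset.mem_filter]; exact ⟨hv, hvB'⟩
      have htv : t v ≤ t P := by rw [hPt]; exact hP0max v hvV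
      have hvBq : (v.2 : ℚ) < B := by exact_mod_cast hvB'
      have hcross : ((v.1 : ℚ) - Q.1) * ((B : ℚ) - P.2) ≤ ((P.1 : ℚ) - Q.1) * ((B : ℚ) - v.2) := by
        rw [ht] at htv
        have := (div_le_div_iff₀ (by linarith : (0:ℚ) < (B : ℚ) - v.2)
          (by linarith : (0:ℚ) < (B : ℚ) - P.2)).1 htv
        linarith [this]
      nlinarith [hcross, hQ2q]
  -- the face condition
  have claim2 : ∀ v ∈ A, lfun ⟨P, Q⟩ v = lfun ⟨P, Q⟩ P → P.2 ≤ v.2 ∧ v.2 ≤ Q.2 := by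
    intro v hv heq
    have hvB : v.2 ≤ B := hQ0max v hv
    refine ⟨?_, by omega⟩
    rcases eq_or_lt_of_le hvB with hvB' | hvB'
    · omega
    · have hvV : v ∈ V := by rw [hV, Finset.mem_filter]; exact ⟨hv, hvB'⟩
      have hvBq : (v.2 : ℚ) < B := by exact_mod_cast hvB'
      have heq' : ((Q.2 : ℚ) - P.2) * v.1 - ((Q.1 : ℚ) - P.1) * v.2 =
          ((Q.2 : ℚ) - P.2) * P.1 - ((Q.1 : ℚ) - P.1) * P.2 := by
        have : ((Q.2 : ℤ) - P.2) * v.1 - ((Q.1 : ℤ) - P.1) * v.2 =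
          ((Q.2 : ℤ) - P.2) * P.1 - ((Q.1 : ℤ) - P.1) * P.2 := heq
        exact_mod_cast this
      have hcross : ((v.1 : ℚ) - Q.1) * ((B : ℚ) - P.2) = ((P.1 : ℚ) - Q.1) * ((B : ℚ) - v.2) := by
        nlinarith [heq', hQ2q]
      have htveq : t v = t P0 := by
        rw [← hPt, ht]
        rw [div_eq_div_iff (by linarith : ((B : ℚ) - v.2) ≠ 0) (by linarith : ((B : ℚ) - P.2) ≠ 0)]
        linarith [hcross]
      exact hPmin v (by rw [Finset.mem_filter]; exact ⟨hvV, htveq⟩)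
  have hQ21 : Q.2 = 1 := hA P Q hPA hQA (by omega) claim1 claim2
  omega

end Prop22Aux


/-- Proposition 2.2: if `h` has no constant term, both partial derivatives are non-zero,
`h` is divisible neither by `X²` nor by `Y²`, and each of the right and top Newton
polygons is empty or consists only of its exceptional segment, then
`h = aX + bY + cXY` with `ab ≠ 0` or `c ≠ 0`. -/
theorem stmt8 (h : MvPolynomial (Fin 2) ℂ)
    (h00 : MvPolynomial.coeff 0 h = 0)
    (hdx : MvPolynomial.pderiv (0 : Fin 2) h ≠ 0)
    (hdy : MvPolynomial.pderiv (1 : Fin 2) h ≠ 0)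
    (hX2 : ¬ (MvPolynomial.X 0 ^ 2 ∣ h))
    (hY2 : ¬ (MvPolynomial.X 1 ^ 2 ∣ h))
    (hr : ∀ S : Seg, RightSeg h S → RExcep S)
    (ht : ∀ S : Seg, TopSeg h S → TExcep S) :
    ∃ a b c : ℂ,
      h = MvPolynomial.C a * MvPolynomial.X 0 + MvPolynomial.C b * MvPolynomial.X 1 +
          MvPolynomial.C c * (MvPolynomial.X 0 * MvPolynomial.X 1) ∧
      (a * b ≠ 0 ∨ c ≠ 0) := by
  classical
  open Prop22Aux in
  -- existence of low points from non-divisibility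
  have hlowY : ∃ v ∈ supp h, v.2 ≤ 1 := by
    by_contra hc
    push_neg at hc
    apply hY2
    apply pow_dvd
    intro d hd
    have hm : (d 0, d 1) ∈ supp h := Finset.mem_image_of_mem _ hd
    have := hc _ hm
    exact this
  have hlowX : ∃ v ∈ supp h, v.1 ≤ 1 := by
    by_contra hc
    push_neg at hc
    apply hX2
    apply pow_dvd
    intro d hd
    have hm : (d 0, d 1) ∈ supp h := Finset.mem_image_of_mem _ hd
    have := hc _ hm
    exact this
  -- all points of the support have second coordinate ≤ 1
  have hbetale : ∀ v ∈ supp h, v.2 ≤ 1 := by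
    apply key
    · intro P Q hP hQ hlt h1 h2
      exact (hr ⟨P, Q⟩ ⟨hP, hQ, hlt, h1, h2⟩).2
    · exact hlowY
  -- all points of the support have first coordinate ≤ 1 (via the swapped set)
  have halphale : ∀ v ∈ supp h, v.1 ≤ 1 := by
    have hkey : ∀ v ∈ (supp h).image Prod.swap, v.2 ≤ 1 := by
      apply key
      · intro P Q hP hQ hlt h1 h2
        simp only [Finset.mem_image] at hP hQ
        obtain ⟨P', hP', hPs⟩ := hP
        obtain ⟨Q', hQ', hQs⟩ := hQ
        have hPP : P.swap = P' := by rw [← hPs, Prod.swap_swap]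
        have hQQ : Q.swap = Q' := by rw [← hQs, Prod.swap_swap]
        have hTop : TopSeg h ⟨P.swap, Q.swap⟩ := by
          refine ⟨by rw [hPP]; exact hP', by rw [hQQ]; exact hQ', hlt, ?_, ?_⟩
          · intro v hv
            have hvm : v.swap ∈ (supp h).image Prod.swap := Finset.mem_image_of_mem _ hv
            have := h1 v.swap hvm
            simpa [lfun, gfun] using this
          · intro v hv hveq
            have hvm : v.swap ∈ (supp h).image Prod.swap := Finset.mem_image_of_mem _ hv
            have := h2 v.swap hvm (by simpa [lfun, gfun] using hveq)
            simpa using this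
        exact (ht _ hTop).2
      · obtain ⟨v, hv, hv1⟩ := hlowX
        exact ⟨v.swap, Finset.mem_image_of_mem _ hv, hv1⟩
    intro v hv
    have := hkey v.swap (Finset.mem_image_of_mem _ hv)
    simpa using this
  -- bounds on exponents of support monomials
  have hbound : ∀ d ∈ h.support, d 0 ≤ 1 ∧ d 1 ≤ 1 := by
    intro d hd
    have hmem : (d 0, d 1) ∈ supp h := Finset.mem_image_of_mem _ hd
    exact ⟨halphale _ hmem, hbetale _ hmem⟩
  have hbound' : ∀ α β : ℕ, pairRep (α, β) ∈ h.support → α ≤ 1 ∧ β ≤ 1 := by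
    intro α β hs
    have := hbound _ hs
    simpa using this
  have hrep00 : pairRep (0, 0) = 0 := by ext i; fin_cases i <;> simp
  -- the coefficient computation
  have main : ∀ α β : ℕ, MvPolynomial.coeff (pairRep (α, β)) h =
      (if ((1 : ℕ), (0 : ℕ)) = (α, β) then MvPolynomial.coeff (pairRep (1, 0)) h else 0) +
      (if ((0 : ℕ), (1 : ℕ)) = (α, β) then MvPolynomial.coeff (pairRep (0, 1)) h else 0) +
      (if ((1 : ℕ), (1 : ℕ)) = (α, β) then MvPolynomial.coeff (pairRep (1, 1)) h else 0) := by
    intro α β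
    by_cases hs : pairRep (α, β) ∈ h.support
    · obtain ⟨hα, hβ⟩ := hbound' _ _ hs
      rcases (by omega : α = 0 ∨ α = 1) with rfl | rfl <;>
        rcases (by omega : β = 0 ∨ β = 1) with rfl | rfl
      · rw [hrep00] at hs
        exact absurd h00 (MvPolynomial.mem_support_iff.1 hs)
      · rw [if_neg (by decide), if_pos rfl, if_neg (by decide)]; ring
      · rw [if_pos rfl, if_neg (by decide), if_neg (by decide)]; ring
      · rw [if_neg (by decide), if_neg (by decide), if_pos rfl]; ring
    · have h0 := MvPolynomial.notMem_support_iff.1 hs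
      rw [h0]
      have z1 : (if ((1 : ℕ), (0 : ℕ)) = (α, β) then MvPolynomial.coeff (pairRep (1, 0)) h else 0)
          = 0 := by
        split_ifs with e
        · rw [e]; exact h0
        · rfl
      have z2 : (if ((0 : ℕ), (1 : ℕ)) = (α, β) then MvPolynomial.coeff (pairRep (0, 1)) h else 0)
          = 0 := by
        split_ifs with e
        · rw [e]; exact h0
        · rfl
      have z3 : (if ((1 : ℕ), (1 : ℕ)) = (α, β) then MvPolynomial.coeff (pairRep (1, 1)) h else 0)
          = 0 := by
        split_ifs with e
        · rw [e]; exact h0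
        · rfl
      rw [z1, z2, z3]; ring
  refine ⟨MvPolynomial.coeff (pairRep (1, 0)) h, MvPolynomial.coeff (pairRep (0, 1)) h,
    MvPolynomial.coeff (pairRep (1, 1)) h, ?_, ?_⟩
  · -- the polynomial identity
    have hX0 : (MvPolynomial.X 0 : MvPolynomial (Fin 2) ℂ) =
        MvPolynomial.monomial (pairRep (1, 0)) 1 := by
      rw [show pairRep (1, 0) = Finsupp.single 0 1 from by ext i; fin_cases i <;> simp]
      rfl
    have hX1 : (MvPolynomial.X 1 : MvPolynomial (Fin 2) ℂ) =
        MvPolynomial.monomial (pairRep (0, 1)) 1 := by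
      rw [show pairRep (0, 1) = Finsupp.single 1 1 from by ext i; fin_cases i <;> simp]
      rfl
    have hX01 : (MvPolynomial.X 0 * MvPolynomial.X 1 : MvPolynomial (Fin 2) ℂ) =
        MvPolynomial.monomial (pairRep (1, 1)) 1 := by
      have hadd : pairRep (1, 0) + pairRep (0, 1) = pairRep (1, 1) := by
        ext i; fin_cases i <;> simp [pairRep]
      rw [hX0, hX1, MvPolynomial.monomial_mul, one_mul, hadd]
    rw [hX01, hX0, hX1, MvPolynomial.C_mul_monomial, MvPolynomial.C_mul_monomial,
      MvPolynomial.C_mul_monomial, mul_one, mul_one, mul_one]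
    apply MvPolynomial.ext
    intro d
    rw [rep_eq d]
    simp only [MvPolynomial.coeff_add, MvPolynomial.coeff_monomial, pairRep_inj_iff]
    exact main (d 0) (d 1)
  · -- nonvanishing
    by_cases hc : MvPolynomial.coeff (pairRep (1, 1)) h = 0
    · left
      have ha : MvPolynomial.coeff (pairRep (1, 0)) h ≠ 0 := by
        obtain ⟨d, hd, hdi⟩ := exists_pos_of_pderiv hdx
        obtain ⟨h1, h2⟩ := hbound d hd
        have hd0 : d 0 = 1 := by omega
        have hrepd : d = pairRep (1, d 1) := by
          conv_lhs => rw [rep_eq d]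
          rw [hd0]
        rcases (by omega : d 1 = 0 ∨ d 1 = 1) with h3 | h3
        · rw [hrepd, h3] at hd
          exact MvPolynomial.mem_support_iff.1 hd
        · rw [hrepd, h3] at hd
          exact absurd hc (MvPolynomial.mem_support_iff.1 hd)
      have hb : MvPolynomial.coeff (pairRep (0, 1)) h ≠ 0 := by
        obtain ⟨d, hd, hdi⟩ := exists_pos_of_pderiv hdy
        obtain ⟨h1, h2⟩ := hbound d hd
        have hd1 : d 1 = 1 := by omega
        have hrepd : d = pairRep (d 0, 1) := by
          conv_lhs => rw [rep_eq d]
          rw [hd1]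
        rcases (by omega : d 0 = 0 ∨ d 0 = 1) with h3 | h3
        · rw [hrepd, h3] at hd
          exact MvPolynomial.mem_support_iff.1 hd
        · rw [hrepd, h3] at hd
          exact absurd hc (MvPolynomial.mem_support_iff.1 hd)
      exact mul_ne_zero ha hb
    · right; exact hc
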